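/- For the bivariate power distribution F(t1,t2) = (t1/b1)^{c1}·(t2/b2)^{c2 + θ log(t1/b1)} on (0,b1)×(0,b2) with θ ≤ 0, c1, c2 > 0, the conditional dynamic CPE satisfies ε̄*_i(X;t1,t2) = c_i(t_j)·m_i^X(t1,t2) for i ≠ j, where c_i(t_j) ∈ (0,1) is a function of t_j alone (specifically, for i=1, c1(t2) = (c1 + θ log(t2/b2))/(1 + c1 + θ log(t2/b2))). -/

import Mathlib

open MeasureTheory Real Set intervalIntegral

lemma aux_int_pow (α t : ℝ) (hα : 0 < α) (ht : 0 < t) :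
    (∫ u in (0:ℝ)..t, (u / t) ^ α) = t / (α + 1) := by
  rw [intervalIntegral.integral_comp_div (f := fun u => u ^ α) ht.ne',
    zero_div, div_self ht.ne', integral_rpow (Or.inl (by linarith))]
  rw [Real.one_rpow, Real.zero_rpow (by linarith)]
  simp [smul_eq_mul]
  ring

lemma aux_int_pow_log_one (α : ℝ) (hα : 0 < α) :
    (∫ u in (0:ℝ)..1, u ^ α * Real.log (u ^ α)) = -α / (α + 1) ^ 2 := by
  have hα1 : (0:ℝ) < α + 1 := by linarith
  set G : ℝ → ℝ := fun u =>
    (α / (α + 1)) * (u ^ α * (u * Real.log u)) - (α / (α + 1) ^ 2) * (u ^ α * u) with hG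
  have hrc : Continuous fun u : ℝ => u ^ α :=
    continuous_id.rpow_const fun x => Or.inr hα.le
  have hcontG : Continuous G := by
    exact (continuous_const.mul (hrc.mul Real.continuous_mul_log)).sub
      (continuous_const.mul (hrc.mul continuous_id))
  have hint : IntervalIntegrable (fun u : ℝ => u ^ α * Real.log (u ^ α)) volume 0 1 := by
    exact (Real.continuous_mul_log.comp hrc).intervalIntegrable 0 1
  have hderiv : ∀ u ∈ Ioo (0:ℝ) 1, HasDerivAt G (u ^ α * Real.log (u ^ α)) u := by
    intro u hu
    have hu0 : 0 < u := hu.1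
    have h1 : HasDerivAt (fun v : ℝ => v ^ α) (α * u ^ (α - 1)) u :=
      Real.hasDerivAt_rpow_const (Or.inl hu0.ne')
    have h2 : HasDerivAt (fun v : ℝ => v * Real.log v) (Real.log u + 1) u :=
      Real.hasDerivAt_mul_log hu0.ne'
    have h3 : HasDerivAt (fun v : ℝ => v ^ α * (v * Real.log v))
        (α * u ^ (α - 1) * (u * Real.log u) + u ^ α * (Real.log u + 1)) u := h1.mul h2
    have h4 : HasDerivAt (fun v : ℝ => v ^ α * v)
        (α * u ^ (α - 1) * u + u ^ α * 1) u := h1.mul (hasDerivAt_id u)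
    have h5 := (h3.const_mul (α / (α + 1))).sub (h4.const_mul (α / (α + 1) ^ 2))
    refine HasDerivAt.congr_deriv h5 ?_
    have hk : u ^ (α - 1) = u ^ α / u := by
      rw [eq_div_iff hu0.ne', ← Real.rpow_add_one hu0.ne', sub_add_cancel]
    rw [hk, Real.log_rpow hu0]
    field_simp
    ring
  have := intervalIntegral.integral_eq_sub_of_hasDerivAt_of_le (by norm_num)
    hcontG.continuousOn hderiv hint
  rw [this, hG]
  simp [Real.zero_rpow hα.ne', Real.one_rpow, Real.log_one]
  ring

lemma aux_int_pow_log (α t : ℝ) (hα : 0 < α) (ht : 0 < t) :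
    (∫ u in (0:ℝ)..t, (u / t) ^ α * Real.log ((u / t) ^ α)) = -(α * t) / (α + 1) ^ 2 := by
  rw [intervalIntegral.integral_comp_div (f := fun u => u ^ α * Real.log (u ^ α)) ht.ne',
    zero_div, div_self ht.ne', aux_int_pow_log_one α hα]
  rw [smul_eq_mul]
  ring

lemma aux_ratio (b1 b2 c1 c2 θ t1 t2 x : ℝ)
    (hb1 : 0 < b1) (hb2 : 0 < b2) (ht1 : 0 < t1) (ht2 : 0 < t2) (hx : 0 < x) :
    (x / b1) ^ c1 * (t2 / b2) ^ (c2 + θ * Real.log (x / b1)) =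
      ((t1 / b1) ^ c1 * (t2 / b2) ^ (c2 + θ * Real.log (t1 / b1))) *
        (x / t1) ^ (c1 + θ * Real.log (t2 / b2)) := by
  rw [Real.rpow_def_of_pos (div_pos hx hb1), Real.rpow_def_of_pos (div_pos ht2 hb2),
    Real.rpow_def_of_pos (div_pos ht1 hb1), Real.rpow_def_of_pos (div_pos ht2 hb2),
    Real.rpow_def_of_pos (div_pos hx ht1), ← Real.exp_add, ← Real.exp_add, ← Real.exp_add]
  congr 1
  rw [Real.log_div hx.ne' hb1.ne', Real.log_div ht1.ne' hb1.ne',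
    Real.log_div ht2.ne' hb2.ne', Real.log_div hx.ne' ht1.ne']
  ring

lemma aux_ratio2 (b2 β t2 x : ℝ) (hb2 : 0 < b2) (ht2 : 0 < t2) (hx : 0 < x) :
    (x / b2) ^ β = (t2 / b2) ^ β * (x / t2) ^ β := by
  rw [← Real.mul_rpow (div_pos ht2 hb2).le (div_pos hx ht2).le]
  congr 1
  field_simp

/-- For the bivariate power distribution
`F(t1,t2) = (t1/b1)^{c1}·(t2/b2)^{c2+θ log(t1/b1)}` on `(0,b1)×(0,b2)` with
`θ ≤ 0`, `c1, c2 > 0`, the conditional dynamic CPE satisfies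
`ε̄*_i(X;t1,t2) = c_i(t_j)·m_i^X(t1,t2)` where
`c1(t2) = (c1+θ log(t2/b2))/(1+c1+θ log(t2/b2)) ∈ (0,1)` and symmetrically
`c2(t1) = (c2+θ log(t1/b1))/(1+c2+θ log(t1/b1)) ∈ (0,1)`. -/
theorem bivariate_power_distribution_CDCPE
    (b1 b2 c1 c2 θ t1 t2 : ℝ)
    (hb1 : 0 < b1) (hb2 : 0 < b2) (hc1 : 0 < c1) (hc2 : 0 < c2) (hθ : θ ≤ 0)
    (ht1 : 0 < t1) (ht1' : t1 < b1) (ht2 : 0 < t2) (ht2' : t2 < b2)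
    (F : ℝ → ℝ → ℝ)
    (hF : ∀ s1 ∈ Set.Ioo (0:ℝ) b1, ∀ s2 ∈ Set.Ioo (0:ℝ) b2,
      F s1 s2 = (s1 / b1) ^ c1 * (s2 / b2) ^ (c2 + θ * Real.log (s1 / b1)))
    (hF0 : ∀ s1 s2, s1 ≤ 0 ∨ s2 ≤ 0 → F s1 s2 = 0) :
    ((c1 + θ * Real.log (t2 / b2)) / (1 + c1 + θ * Real.log (t2 / b2))
        ∈ Set.Ioo (0:ℝ) 1) ∧
    ((c2 + θ * Real.log (t1 / b1)) / (1 + c2 + θ * Real.log (t1 / b1))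
        ∈ Set.Ioo (0:ℝ) 1) ∧
    ((-∫ x in (0:ℝ)..t1, (F x t2 / F t1 t2) * Real.log (F x t2 / F t1 t2)) =
      ((c1 + θ * Real.log (t2 / b2)) / (1 + c1 + θ * Real.log (t2 / b2))) *
        ((∫ x in (0:ℝ)..t1, F x t2) / F t1 t2)) ∧
    ((-∫ x in (0:ℝ)..t2, (F t1 x / F t1 t2) * Real.log (F t1 x / F t1 t2)) =
      ((c2 + θ * Real.log (t1 / b1)) / (1 + c2 + θ * Real.log (t1 / b1))) *
        ((∫ x in (0:ℝ)..t2, F t1 x) / F t1 t2)) := by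
  set α := c1 + θ * Real.log (t2 / b2) with hαdef
  set β := c2 + θ * Real.log (t1 / b1) with hβdef
  have hl2 : Real.log (t2 / b2) < 0 :=
    Real.log_neg (div_pos ht2 hb2) ((div_lt_one hb2).mpr ht2')
  have hl1 : Real.log (t1 / b1) < 0 :=
    Real.log_neg (div_pos ht1 hb1) ((div_lt_one hb1).mpr ht1')
  have hα : 0 < α := by
    have h0 := mul_nonneg (neg_nonneg.mpr hθ) (neg_nonneg.mpr hl2.le)
    have : 0 ≤ θ * Real.log (t2 / b2) := by nlinarith
    rw [hαdef]; linarith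
  have hβ : 0 < β := by
    have h0 := mul_nonneg (neg_nonneg.mpr hθ) (neg_nonneg.mpr hl1.le)
    have : 0 ≤ θ * Real.log (t1 / b1) := by nlinarith
    rw [hβdef]; linarith
  have hK : F t1 t2 = (t1 / b1) ^ c1 * (t2 / b2) ^ (c2 + θ * Real.log (t1 / b1)) :=
    hF t1 ⟨ht1, ht1'⟩ t2 ⟨ht2, ht2'⟩
  have hKpos : 0 < F t1 t2 := by
    rw [hK]
    exact mul_pos (Real.rpow_pos_of_pos (div_pos ht1 hb1) _)
      (Real.rpow_pos_of_pos (div_pos ht2 hb2) _)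
  -- ratio lemmas on the closed intervals
  have hr1 : ∀ x ∈ Icc (0:ℝ) t1, F x t2 = F t1 t2 * (x / t1) ^ α := by
    rintro x ⟨hx0, hx1⟩
    rcases hx0.eq_or_lt with h | h
    · rw [← h, hF0 0 t2 (Or.inl le_rfl), zero_div, Real.zero_rpow hα.ne', mul_zero]
    · rw [hF x ⟨h, lt_of_le_of_lt hx1 ht1'⟩ t2 ⟨ht2, ht2'⟩, hK, hαdef]
      exact aux_ratio b1 b2 c1 c2 θ t1 t2 x hb1 hb2 ht1 ht2 h
  have hr2 : ∀ x ∈ Icc (0:ℝ) t2, F t1 x = F t1 t2 * (x / t2) ^ β := by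
    rintro x ⟨hx0, hx1⟩
    rcases hx0.eq_or_lt with h | h
    · rw [← h, hF0 t1 0 (Or.inr le_rfl), zero_div, Real.zero_rpow hβ.ne', mul_zero]
    · rw [hF t1 ⟨ht1, ht1'⟩ x ⟨h, lt_of_le_of_lt hx1 ht2'⟩, hK, hβdef,
        aux_ratio2 b2 β t2 x hb2 ht2 h, hβdef]
      ring
  -- mean integrals
  have hI1 : (∫ x in (0:ℝ)..t1, F x t2) = F t1 t2 * (t1 / (α + 1)) := by
    rw [intervalIntegral.integral_congr (g := fun x => F t1 t2 * (x / t1) ^ α)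
      (fun x hx => hr1 x (by rwa [uIcc_of_le ht1.le] at hx)),
      intervalIntegral.integral_const_mul, aux_int_pow α t1 hα ht1]
  have hI2 : (∫ x in (0:ℝ)..t2, F t1 x) = F t1 t2 * (t2 / (β + 1)) := by
    rw [intervalIntegral.integral_congr (g := fun x => F t1 t2 * (x / t2) ^ β)
      (fun x hx => hr2 x (by rwa [uIcc_of_le ht2.le] at hx)),
      intervalIntegral.integral_const_mul, aux_int_pow β t2 hβ ht2]
  -- entropy integrals
  have hJ1 : (∫ x in (0:ℝ)..t1, (F x t2 / F t1 t2) * Real.log (F x t2 / F t1 t2)) =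
      -(α * t1) / (α + 1) ^ 2 := by
    rw [intervalIntegral.integral_congr
      (g := fun x => (x / t1) ^ α * Real.log ((x / t1) ^ α)) ?_,
      aux_int_pow_log α t1 hα ht1]
    intro x hx
    rw [uIcc_of_le ht1.le] at hx
    dsimp only
    rw [hr1 x hx, mul_div_cancel_left₀ _ hKpos.ne']
  have hJ2 : (∫ x in (0:ℝ)..t2, (F t1 x / F t1 t2) * Real.log (F t1 x / F t1 t2)) =
      -(β * t2) / (β + 1) ^ 2 := by
    rw [intervalIntegral.integral_congr
      (g := fun x => (x / t2) ^ β * Real.log ((x / t2) ^ β)) ?_,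
      aux_int_pow_log β t2 hβ ht2]
    intro x hx
    rw [uIcc_of_le ht2.le] at hx
    dsimp only
    rw [hr2 x hx, mul_div_cancel_left₀ _ hKpos.ne']
  have hα1 : (1:ℝ) + c1 + θ * Real.log (t2 / b2) = α + 1 := by rw [hαdef]; ring
  have hβ1 : (1:ℝ) + c2 + θ * Real.log (t1 / b1) = β + 1 := by rw [hβdef]; ring
  have hα1' : (0:ℝ) < α + 1 := by linarith
  have hβ1' : (0:ℝ) < β + 1 := by linarith
  refine ⟨⟨?_, ?_⟩, ⟨?_, ?_⟩, ?_, ?_⟩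
  · exact div_pos hα (by rw [hα1]; linarith)
  · rw [hα1]; exact (div_lt_one hα1').mpr (by linarith)
  · exact div_pos hβ (by rw [hβ1]; linarith)
  · rw [hβ1]; exact (div_lt_one hβ1').mpr (by linarith)
  · rw [hJ1, hI1, hα1, mul_comm (F t1 t2), mul_div_assoc, div_self hKpos.ne', mul_one]
    field_simp
  · rw [hJ2, hI2, hβ1, mul_comm (F t1 t2), mul_div_assoc, div_self hKpos.ne', mul_one]
    field_simp
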